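/- Let Z₁, Z₂, Z₃ be {0,1}-valued random variables such that H(Z₁) ≥ H(Z₂) and Z₃ is independent of the pair (Z₁, Z₂). Then H(Z₁) − H(Z₂) ≥ |H(Z₁ ⊕ Z₃) − H(Z₂ ⊕ Z₃)|. Moreover, if H(Z₁) > H(Z₂) and H(Z₃) > 0, the inequality is strict. -/

import Mathlib

open MeasureTheory ProbabilityTheory

/-- Binary entropy (base 2). -/
noncomputable def hb (p : ℝ) : ℝ := -(p * Real.logb 2 p) - (1 - p) * Real.logb 2 (1 - p)

/-- Shannon entropy of a `{0,1}`-valued random variable. -/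
noncomputable def H2 {Ω : Type*} [MeasurableSpace Ω] (μ : Measure Ω) (Z : Ω → ZMod 2) : ℝ :=
  hb ((μ {ω | Z ω = 1}).toReal)


open Real Set

noncomputable def mstar (p r : ℝ) : ℝ := p * (1 - 2 * r) + r

lemma mstar_mem {p r : ℝ} (hp : p ∈ Icc (0:ℝ) 2⁻¹) (hr : r ∈ Icc (0:ℝ) 2⁻¹) :
    mstar p r ∈ Icc (0:ℝ) 2⁻¹ := by
  obtain ⟨hp0, hp1⟩ := hp; obtain ⟨hr0, hr1⟩ := hr
  constructor
  · unfold mstar; nlinarith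
  · unfold mstar; nlinarith

lemma mstar_mono {r : ℝ} (hr : r ∈ Icc (0:ℝ) 2⁻¹) {p q : ℝ} (h : q ≤ p) :
    mstar q r ≤ mstar p r := by
  obtain ⟨hr0, hr1⟩ := hr; unfold mstar; nlinarith

/-- (A) monotonicity of `p ↦ binEntropy (p ⋆ r)` on `[0, 1/2]`. -/
lemma lemA {r : ℝ} (hr : r ∈ Icc (0:ℝ) 2⁻¹) :
    MonotoneOn (fun p => binEntropy (mstar p r)) (Icc (0:ℝ) 2⁻¹) := fun x hx y hy hxy =>
  binEntropy_strictMonoOn.monotoneOn (mstar_mem hx hr) (mstar_mem hy hr) (mstar_mono hr hxy)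

private lemma gap_cont (r : ℝ) :
    ContinuousOn (fun p => binEntropy p - binEntropy (mstar p r)) (Icc (0:ℝ) 2⁻¹) := by
  apply Continuous.continuousOn
  exact binEntropy_continuous.sub (binEntropy_continuous.comp (by unfold mstar; fun_prop))

private lemma hasDerivAt_gap {r : ℝ} (hr : r ∈ Icc (0:ℝ) 2⁻¹) {x : ℝ}
    (hx : x ∈ Ioo (0:ℝ) 2⁻¹) :
    HasDerivAt (fun p => binEntropy p - binEntropy (mstar p r))
      ((log (1 - x) - log x) - (log (1 - mstar x r) - log (mstar x r)) * (1 - 2 * r)) x := by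
  obtain ⟨hr0, hr1⟩ := hr; obtain ⟨hx0, hx1⟩ := hx
  have hsmem : mstar x r ∈ Icc (0:ℝ) 2⁻¹ :=
    mstar_mem ⟨hx0.le, hx1.le⟩ ⟨hr0, hr1⟩
  have hsx : x ≤ mstar x r := by unfold mstar; nlinarith
  have hs0 : mstar x r ≠ 0 := by linarith [hsx]
  have hs1 : mstar x r ≠ 1 := by have := hsmem.2; intro h; rw [h] at this; norm_num at this
  have h2 : HasDerivAt (fun p : ℝ => mstar p r) (1 - 2 * r) x := by
    unfold mstar; simpa using ((hasDerivAt_id x).mul_const (1 - 2 * r)).add_const r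
  exact (hasDerivAt_binEntropy hx0.ne' (by linarith : x ≠ 1)).sub
    (by have := (hasDerivAt_binEntropy hs0 hs1).comp x h2; exact this)

private lemma gap_deriv_facts {r : ℝ} (hr : r ∈ Icc (0:ℝ) 2⁻¹) {x : ℝ}
    (hx : x ∈ Ioo (0:ℝ) 2⁻¹) :
    log (1 - mstar x r) ≤ log (1 - x) ∧ log x ≤ log (mstar x r) ∧
      log (mstar x r) ≤ log (1 - mstar x r) := by
  obtain ⟨hr0, hr1⟩ := hr; obtain ⟨hx0, hx1⟩ := hx
  have hsmem : mstar x r ∈ Icc (0:ℝ) 2⁻¹ := mstar_mem ⟨hx0.le, hx1.le⟩ ⟨hr0, hr1⟩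
  have hsx : x ≤ mstar x r := by unfold mstar; nlinarith
  have hs0 : 0 < mstar x r := lt_of_lt_of_le hx0 hsx
  refine ⟨Real.log_le_log (by linarith [hsmem.2]) (by linarith),
    Real.log_le_log hx0 hsx, Real.log_le_log hs0 (by linarith [hsmem.2])⟩

/-- (B) monotonicity of the entropy gap. -/
lemma lemB {r : ℝ} (hr : r ∈ Icc (0:ℝ) 2⁻¹) :
    MonotoneOn (fun p => binEntropy p - binEntropy (mstar p r)) (Icc (0:ℝ) 2⁻¹) := by
  have hint : interior (Icc (0:ℝ) 2⁻¹) = Ioo (0:ℝ) 2⁻¹ := interior_Icc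
  apply monotoneOn_of_deriv_nonneg (convex_Icc _ _) (gap_cont r)
  · intro x hx
    rw [hint] at hx
    exact (hasDerivAt_gap hr hx).differentiableAt.differentiableWithinAt
  · intro x hx
    rw [hint] at hx
    rw [(hasDerivAt_gap hr hx).deriv]
    obtain ⟨h1, h2, h3⟩ := gap_deriv_facts hr hx
    nlinarith [h1, h2, h3, mul_nonneg (sub_nonneg.2 h3) hr.1]

/-- (B'), strict version when `0 < r`. -/
lemma lemBstrict {r : ℝ} (hr : r ∈ Ioc (0:ℝ) 2⁻¹) :
    StrictMonoOn (fun p => binEntropy p - binEntropy (mstar p r)) (Icc (0:ℝ) 2⁻¹) := by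
  have hr' : r ∈ Icc (0:ℝ) 2⁻¹ := ⟨hr.1.le, hr.2⟩
  apply strictMonoOn_of_deriv_pos (convex_Icc _ _) (gap_cont r)
  intro x hx
  rw [interior_Icc] at hx
  rw [(hasDerivAt_gap hr' hx).deriv]
  obtain ⟨h1, h2, h3⟩ := gap_deriv_facts hr' hx
  obtain ⟨hx0, hx1⟩ := hx
  have hr0 := hr.1
  have hr1 := hr.2
  have hsmem : mstar x r ∈ Icc (0:ℝ) 2⁻¹ := mstar_mem ⟨hx0.le, hx1.le⟩ hr'
  rcases lt_or_eq_of_le hsmem.2 with hs | hs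
  · -- mstar x r < 1/2 : then log(1-s) - log s > 0 strictly and r > 0
    have hs0 : 0 < mstar x r := by
      have hsx : x ≤ mstar x r := by unfold mstar; nlinarith
      linarith
    have hstrict : log (mstar x r) < log (1 - mstar x r) :=
      Real.log_lt_log hs0 (by linarith)
    nlinarith [h1, h2, hstrict]
  · -- mstar x r = 1/2 : then x < 1/2 gives log(1-x) - log x > 0, and RHS factor handled
    have hxs : log x < log (1 - x) := Real.log_lt_log hx0 (by linarith)
    rw [hs]
    norm_num
    nlinarith [hxs]
lemma mstar_one_sub_left (p r : ℝ) : mstar (1 - p) r = 1 - mstar p r := by unfold mstar; ring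
lemma mstar_one_sub_right (p r : ℝ) : mstar p (1 - r) = 1 - mstar p r := by unfold mstar; ring

lemma fold_mem {p : ℝ} (hp : p ∈ Icc (0:ℝ) 1) : min p (1 - p) ∈ Icc (0:ℝ) 2⁻¹ := by
  obtain ⟨h0, h1⟩ := hp
  constructor
  · exact le_min h0 (by linarith)
  · rcases le_total p (1 - p) with h | h
    · rw [min_eq_left h]; linarith
    · rw [min_eq_right h]; linarith

lemma binEntropy_fold (p : ℝ) : Real.binEntropy (min p (1 - p)) = Real.binEntropy p := by
  rcases le_total p (1 - p) with h | h
  · rw [min_eq_left h]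
  · rw [min_eq_right h, Real.binEntropy_one_sub]

lemma binEntropy_mstar_fold (p r : ℝ) :
    Real.binEntropy (mstar (min p (1 - p)) (min r (1 - r))) = Real.binEntropy (mstar p r) := by
  rcases le_total p (1 - p) with h | h <;> rcases le_total r (1 - r) with h' | h' <;>
    simp only [min_eq_left, min_eq_right, h, h', mstar_one_sub_left, mstar_one_sub_right,
      Real.binEntropy_one_sub]

/-- Full scalar lemma. -/
lemma scalar_full {p q r : ℝ} (hp : p ∈ Icc (0:ℝ) 1) (hq : q ∈ Icc (0:ℝ) 1)
    (hr : r ∈ Icc (0:ℝ) 1) (h : Real.binEntropy q ≤ Real.binEntropy p) :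
    |Real.binEntropy (mstar p r) - Real.binEntropy (mstar q r)| ≤
      Real.binEntropy p - Real.binEntropy q ∧
    (Real.binEntropy q < Real.binEntropy p → 0 < Real.binEntropy r →
      |Real.binEntropy (mstar p r) - Real.binEntropy (mstar q r)| <
        Real.binEntropy p - Real.binEntropy q) := by
  set p' := min p (1 - p) with hp'
  set q' := min q (1 - q) with hq'
  set r' := min r (1 - r) with hr'
  have hpm : p' ∈ Icc (0:ℝ) 2⁻¹ := fold_mem hp
  have hqm : q' ∈ Icc (0:ℝ) 2⁻¹ := fold_mem hq
  have hrm : r' ∈ Icc (0:ℝ) 2⁻¹ := fold_mem hr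
  have ep : Real.binEntropy p' = Real.binEntropy p := binEntropy_fold p
  have eq' : Real.binEntropy q' = Real.binEntropy q := binEntropy_fold q
  have er : Real.binEntropy r' = Real.binEntropy r := binEntropy_fold r
  have eps : Real.binEntropy (mstar p' r') = Real.binEntropy (mstar p r) :=
    binEntropy_mstar_fold p r
  have eqs : Real.binEntropy (mstar q' r') = Real.binEntropy (mstar q r) :=
    binEntropy_mstar_fold q r
  rw [← ep, ← eq', ← eps, ← eqs]
  have hle : q' ≤ p' := by
    rw [← Real.binEntropy_strictMonoOn.le_iff_le hqm hpm]
    rw [eq', ep]; exact h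
  have hA : Real.binEntropy (mstar q' r') ≤ Real.binEntropy (mstar p' r') :=
    lemA hrm hqm hpm hle
  have hB : Real.binEntropy p' - Real.binEntropy (mstar p' r') ≥
      Real.binEntropy q' - Real.binEntropy (mstar q' r') := lemB hrm hqm hpm hle
  constructor
  · rw [abs_sub_le_iff]
    constructor
    · linarith
    · linarith
  · intro hlt hrpos
    have hlt' : q' < p' := by
      rw [← Real.binEntropy_strictMonoOn.lt_iff_lt hqm hpm]
      exact hlt
    have hr0 : 0 < r' := by
      rcases lt_or_eq_of_le hrm.1 with h0 | h0
      · exact h0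
      · exfalso
        have : Real.binEntropy r' = 0 := by rw [← h0]; simp
        rw [er] at this; linarith
    have hBs : Real.binEntropy q' - Real.binEntropy (mstar q' r') <
        Real.binEntropy p' - Real.binEntropy (mstar p' r') :=
      lemBstrict ⟨hr0, hrm.2⟩ hqm hpm hlt'
    rw [abs_sub_lt_iff]
    constructor
    · linarith
    · linarith
open MeasureTheory ProbabilityTheory

lemma zmod2_add_eq_one (a b : ZMod 2) : a + b = 1 ↔ (a = 1 ∧ ¬ b = 1) ∨ (¬ a = 1 ∧ b = 1) := by
  revert a b; decide

lemma prob_xor {Ω : Type*} [MeasurableSpace Ω] (μ : Measure Ω) [IsProbabilityMeasure μ]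
    (X Y : Ω → ZMod 2) (hX : Measurable X) (hY : Measurable Y)
    (hInd : IndepFun X Y μ) :
    (μ {ω | X ω + Y ω = 1}).toReal =
      mstar (μ {ω | X ω = 1}).toReal (μ {ω | Y ω = 1}).toReal := by
  have hA : MeasurableSet (X ⁻¹' {1}) := hX (measurableSet_singleton 1)
  have hB : MeasurableSet (Y ⁻¹' {1}) := hY (measurableSet_singleton 1)
  have hset : {ω | X ω + Y ω = 1} =
      (X ⁻¹' {1} ∩ Y ⁻¹' ({1}ᶜ)) ∪ (X ⁻¹' ({1}ᶜ) ∩ Y ⁻¹' {1}) := by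
    ext ω
    simp only [Set.mem_setOf_eq, Set.mem_union, Set.mem_inter_iff, Set.mem_preimage,
      Set.mem_singleton_iff, Set.mem_compl_iff]
    exact zmod2_add_eq_one (X ω) (Y ω)
  have hdisj : Disjoint (X ⁻¹' {1} ∩ Y ⁻¹' ({1}ᶜ)) (X ⁻¹' ({1}ᶜ) ∩ Y ⁻¹' {1}) := by
    apply Set.disjoint_left.mpr
    rintro ω ⟨h1, _⟩ ⟨h2, _⟩
    exact h2 h1
  have h1 : μ (X ⁻¹' {1} ∩ Y ⁻¹' ({1}ᶜ)) = μ (X ⁻¹' {1}) * μ (Y ⁻¹' ({1}ᶜ)) :=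
    hInd.measure_inter_preimage_eq_mul _ _ (measurableSet_singleton 1)
      (measurableSet_singleton 1).compl
  have h2 : μ (X ⁻¹' ({1}ᶜ) ∩ Y ⁻¹' {1}) = μ (X ⁻¹' ({1}ᶜ)) * μ (Y ⁻¹' {1}) :=
    hInd.measure_inter_preimage_eq_mul _ _ (measurableSet_singleton 1).compl
      (measurableSet_singleton 1)
  have hXc : μ (X ⁻¹' ({1}ᶜ)) = 1 - μ (X ⁻¹' {1}) := by
    rw [Set.preimage_compl, prob_compl_eq_one_sub hA]
  have hYc : μ (Y ⁻¹' ({1}ᶜ)) = 1 - μ (Y ⁻¹' {1}) := by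
    rw [Set.preimage_compl, prob_compl_eq_one_sub hB]
  have hmeas : μ ((X ⁻¹' {1} ∩ Y ⁻¹' ({1}ᶜ)) ∪ (X ⁻¹' ({1}ᶜ) ∩ Y ⁻¹' {1})) =
      μ (X ⁻¹' {1}) * (1 - μ (Y ⁻¹' {1})) + (1 - μ (X ⁻¹' {1})) * μ (Y ⁻¹' {1}) := by
    rw [measure_union hdisj (hX (measurableSet_singleton 1).compl |>.inter hB),
      h1, h2, hXc, hYc]
  have hXle : μ (X ⁻¹' {1}) ≤ 1 := prob_le_one
  have hYle : μ (Y ⁻¹' {1}) ≤ 1 := prob_le_one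
  have hXne : μ (X ⁻¹' {1}) ≠ ⊤ := (lt_of_le_of_lt hXle ENNReal.one_lt_top).ne
  have hYne : μ (Y ⁻¹' {1}) ≠ ⊤ := (lt_of_le_of_lt hYle ENNReal.one_lt_top).ne
  have hAeq : {ω | X ω = 1} = X ⁻¹' {1} := rfl
  have hBeq : {ω | Y ω = 1} = Y ⁻¹' {1} := rfl
  rw [hset, hmeas, hAeq, hBeq]
  rw [ENNReal.toReal_add, ENNReal.toReal_mul, ENNReal.toReal_mul,
    ENNReal.toReal_sub_of_le hYle ENNReal.one_ne_top,
    ENNReal.toReal_sub_of_le hXle ENNReal.one_ne_top]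
  · simp only [ENNReal.toReal_one]; unfold mstar; ring
  · exact ENNReal.mul_ne_top hXne (by simp [hYne, ENNReal.sub_ne_top])
  · exact ENNReal.mul_ne_top (by simp [hXne, ENNReal.sub_ne_top]) hYne

lemma hb_eq (p : ℝ) : hb p = Real.binEntropy p / Real.log 2 := by
  unfold hb Real.binEntropy Real.logb
  rw [Real.log_inv, Real.log_inv]
  ring

lemma prob_mem_unit {Ω : Type*} [MeasurableSpace Ω] (μ : Measure Ω) [IsProbabilityMeasure μ]
    (s : Set Ω) : (μ s).toReal ∈ Icc (0:ℝ) 1 :=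
  ⟨ENNReal.toReal_nonneg, by
    have := prob_le_one (μ := μ) (s := s)
    simpa using ENNReal.toReal_mono ENNReal.one_ne_top this⟩
/-- Main theorem. -/
theorem entropy_gap_of_indep_xor {Ω : Type*} [MeasurableSpace Ω] (μ : Measure Ω)
    [IsProbabilityMeasure μ] (Z₁ Z₂ Z₃ : Ω → ZMod 2)
    (hm₁ : Measurable Z₁) (hm₂ : Measurable Z₂) (hm₃ : Measurable Z₃)
    (hInd : IndepFun (fun ω => (Z₁ ω, Z₂ ω)) Z₃ μ)
    (hH : H2 μ Z₂ ≤ H2 μ Z₁) :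
    (|H2 μ (fun ω => Z₁ ω + Z₃ ω) - H2 μ (fun ω => Z₂ ω + Z₃ ω)| ≤ H2 μ Z₁ - H2 μ Z₂) ∧
    (H2 μ Z₂ < H2 μ Z₁ → 0 < H2 μ Z₃ →
      |H2 μ (fun ω => Z₁ ω + Z₃ ω) - H2 μ (fun ω => Z₂ ω + Z₃ ω)| < H2 μ Z₁ - H2 μ Z₂) := by
  have hL : (0:ℝ) < Real.log 2 := Real.log_pos one_lt_two
  set p := (μ {ω | Z₁ ω = 1}).toReal with hp
  set q := (μ {ω | Z₂ ω = 1}).toReal with hq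
  set r := (μ {ω | Z₃ ω = 1}).toReal with hr
  have hInd₁ : IndepFun Z₁ Z₃ μ := hInd.comp measurable_fst measurable_id
  have hInd₂ : IndepFun Z₂ Z₃ μ := hInd.comp measurable_snd measurable_id
  have e1 : H2 μ (fun ω => Z₁ ω + Z₃ ω) = Real.binEntropy (mstar p r) / Real.log 2 := by
    rw [H2, hb_eq, prob_xor μ Z₁ Z₃ hm₁ hm₃ hInd₁]
  have e2 : H2 μ (fun ω => Z₂ ω + Z₃ ω) = Real.binEntropy (mstar q r) / Real.log 2 := by
    rw [H2, hb_eq, prob_xor μ Z₂ Z₃ hm₂ hm₃ hInd₂]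
  have e3 : H2 μ Z₁ = Real.binEntropy p / Real.log 2 := by rw [H2, hb_eq]
  have e4 : H2 μ Z₂ = Real.binEntropy q / Real.log 2 := by rw [H2, hb_eq]
  have e5 : H2 μ Z₃ = Real.binEntropy r / Real.log 2 := by rw [H2, hb_eq]
  rw [e3, e4] at hH
  rw [e1, e2, e3, e4, e5]
  have hple : p ∈ Icc (0:ℝ) 1 := prob_mem_unit μ _
  have hqle : q ∈ Icc (0:ℝ) 1 := prob_mem_unit μ _
  have hrle : r ∈ Icc (0:ℝ) 1 := prob_mem_unit μ _
  have hH' : Real.binEntropy q ≤ Real.binEntropy p := by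
    rwa [div_le_div_iff_of_pos_right hL] at hH
  obtain ⟨hmain, hstrict⟩ := scalar_full hple hqle hrle hH'
  rw [div_sub_div_same, div_sub_div_same, abs_div, abs_of_pos hL]
  constructor
  · rw [div_le_div_iff_of_pos_right hL]; exact hmain
  · intro h1 h2
    rw [div_lt_div_iff_of_pos_right hL] at h1
    have h2' : 0 < Real.binEntropy r := by
      have := h2
      rw [lt_div_iff₀ hL] at this
      simpa using this
    rw [div_lt_div_iff_of_pos_right hL]
    exact hstrict h1 h2'
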